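/- Let c ∈ ℂ with B(c) ≠ 0 and Δ(c) ≠ 0, and let v = (A(c)+√Δ(c))/(A(c)−√Δ(c)). Then |v| = 1 if and only if A(c)² = x·B(c) for some real x with −4 < x ≤ 0. -/

import Mathlib

theorem stmt_11 (A B : Polynomial ℂ) (c s : ℂ) (hB : B.eval c ≠ 0)
    (hΔ : A.eval c ^ 2 + 4 * B.eval c ≠ 0)
    (hs : s ^ 2 = A.eval c ^ 2 + 4 * B.eval c) :
    ‖(A.eval c + s) / (A.eval c - s)‖ = 1 ↔
      ∃ x : ℝ, -4 < x ∧ x ≤ 0 ∧ A.eval c ^ 2 = x * B.eval c := by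
  set a := A.eval c with ha
  set b := B.eval c with hb
  have hs2 : s ^ 2 = a ^ 2 + 4 * b := hs
  have hs0 : s ≠ 0 := by
    intro h; apply hΔ; rw [← hs2, h]; ring
  have hprod : (a - s) * (a + s) = -(4 * b) := by linear_combination -hs2
  have hds : a - s ≠ 0 := by
    intro h
    apply hB
    have h4 : (4 : ℂ) * b = 0 := by linear_combination hprod - (a + s) * h
    rcases mul_eq_zero.mp h4 with h' | h'
    · norm_num at h'
    · exact h'
  rw [norm_div, div_eq_one_iff_eq (norm_ne_zero_iff.mpr hds)]
  set z := a / s with hz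
  have haz : a = z * s := by rw [hz, div_mul_cancel₀ a hs0]
  have step1 : ‖a + s‖ = ‖a - s‖ ↔ z.re = 0 := by
    rw [haz]
    have h1 : z * s + s = (z + 1) * s := by ring
    have h2 : z * s - s = (z - 1) * s := by ring
    rw [h1, h2, norm_mul, norm_mul, mul_left_inj' (norm_ne_zero_iff.mpr hs0),
      Complex.norm_def, Complex.norm_def,
      Real.sqrt_inj (Complex.normSq_nonneg _) (Complex.normSq_nonneg _)]
    simp only [Complex.normSq_apply, Complex.add_re, Complex.add_im, Complex.sub_re,
      Complex.sub_im, Complex.one_re, Complex.one_im]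
    constructor
    · intro h; nlinarith
    · intro h; nlinarith
  have step2 : z.re = 0 ↔ ∃ r : ℝ, r ≤ 0 ∧ z ^ 2 = (r : ℂ) := by
    constructor
    · intro h
      refine ⟨-(z.im ^ 2), by nlinarith, ?_⟩
      simp [Complex.ext_iff, pow_two, Complex.mul_re, Complex.mul_im, h]
    · rintro ⟨r, hr, hzr⟩
      have him : z.re * z.im + z.im * z.re = 0 := by
        have := congrArg Complex.im hzr
        simpa [pow_two, Complex.mul_im] using this
      have hre : z.re * z.re - z.im * z.im = r := by
        have := congrArg Complex.re hzr
        simpa [pow_two, Complex.mul_re] using this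
      rcases mul_eq_zero.mp (by linarith : z.re * z.im = 0) with h' | h'
      · exact h'
      · nlinarith
  have hz2 : z ^ 2 = a ^ 2 / s ^ 2 := div_pow a s 2
  have step3 : ∀ r : ℝ, z ^ 2 = (r : ℂ) ↔ a ^ 2 = (r : ℂ) * s ^ 2 := by
    intro r
    rw [hz2, div_eq_iff (pow_ne_zero 2 hs0)]
  rw [step1, step2]
  constructor
  · rintro ⟨r, hr, hzr⟩
    have h : a ^ 2 = (r : ℂ) * s ^ 2 := (step3 r).mp hzr
    have h1r : (0 : ℝ) < 1 - r := by linarith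
    refine ⟨4 * r / (1 - r), ?_, ?_, ?_⟩
    · rw [lt_div_iff₀ h1r]; linarith
    · exact div_nonpos_of_nonpos_of_nonneg (by linarith) (le_of_lt h1r)
    · have hc : ((1 : ℂ) - r) ≠ 0 := by
        intro hcc
        apply h1r.ne'
        have := congrArg Complex.re hcc
        simpa using this
      push_cast
      rw [div_mul_eq_mul_div, eq_div_iff hc]
      linear_combination h + (r : ℂ) * hs2
  · rintro ⟨x, hx4, hx0, hxb⟩
    have hx4' : (0 : ℝ) < x + 4 := by linarith
    refine ⟨x / (x + 4), div_nonpos_of_nonpos_of_nonneg hx0 (le_of_lt hx4'), ?_⟩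
    rw [step3]
    have hc : ((x : ℂ) + 4) ≠ 0 := by
      intro hcc
      apply hx4'.ne'
      have := congrArg Complex.re hcc
      simpa using this
    push_cast
    rw [div_mul_eq_mul_div, eq_div_iff hc]
    linear_combination 4 * hxb - (x : ℂ) * hs2
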